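/- Let H be the group presented by ⟨x, y, z | xyx⁻¹y⁻², yzy⁻¹z⁻²⟩. If for some integers m and n the element xᵐ is conjugate in H to yⁿ, then m = 0. -/

import Mathlib

/-- The relators of the group `H = ⟨x, y, z ∣ xyx⁻¹y⁻², yzy⁻¹z⁻²⟩`, where
`x = FreeGroup.of 0`, `y = FreeGroup.of 1`, `z = FreeGroup.of 2`. -/
def hxyzRels : Set (FreeGroup (Fin 3)) :=
  {FreeGroup.of (0 : Fin 3) * FreeGroup.of (1 : Fin 3) * (FreeGroup.of (0 : Fin 3))⁻¹ *
     ((FreeGroup.of (1 : Fin 3)) ^ 2)⁻¹,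
   FreeGroup.of (1 : Fin 3) * FreeGroup.of (2 : Fin 3) * (FreeGroup.of (1 : Fin 3))⁻¹ *
     ((FreeGroup.of (2 : Fin 3)) ^ 2)⁻¹}

/-- The map sending `x ↦ 1`, `y ↦ 0`, `z ↦ 0` into `Multiplicative ℤ`. -/
def fmapStmt16 : Fin 3 → Multiplicative ℤ := ![Multiplicative.ofAdd 1, 1, 1]

lemma frelStmt16 : ∀ r ∈ hxyzRels, FreeGroup.lift fmapStmt16 r = 1 := by
  intro r hr
  rcases hr with h | h <;> subst h <;> simp [fmapStmt16]

/-- In the group `H = ⟨x, y, z ∣ xyx⁻¹y⁻², yzy⁻¹z⁻²⟩`, if `xᵐ` is conjugate to `yⁿ`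
for integers `m`, `n`, then `m = 0`. -/
theorem stmt_16 (m n : ℤ) (k : PresentedGroup hxyzRels)
    (h : (PresentedGroup.of 0 : PresentedGroup hxyzRels) ^ m =
      k * (PresentedGroup.of 1 : PresentedGroup hxyzRels) ^ n * k⁻¹) :
    m = 0 := by
  have := congrArg (PresentedGroup.toGroup frelStmt16) h
  simp [PresentedGroup.toGroup.of, fmapStmt16] at this
  exact congrArg Multiplicative.toAdd this
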